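/- Let $X$ be a Banach space containing no subspace isomorphic to $c_0$. Then every weakly unconditionally convergent (weakly unconditionally Cauchy) series in $X$ converges unconditionally. -/

import Mathlib

set_option maxHeartbeats 2000000

open Filter Topology Metric ZeroAtInfty

section helpers

variable {X : Type*} [NormedAddCommGroup X] [NormedSpace ℝ X]

/-- Uniform bound for weakly unconditionally Cauchy sequences. -/
lemma bp_wuc_bound (y : ℕ → X)
    (h : ∀ φ : X →L[ℝ] ℝ, Summable fun n => |φ (y n)|) :
    ∃ M : ℝ, 0 < M ∧ ∀ (s : Finset ℕ) (a : ℕ → ℝ), (∀ n, |a n| ≤ 1) →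
      ‖∑ n ∈ s, a n • y n‖ ≤ M := by
  let ι := Finset ℕ × {a : ℕ → ℝ // ∀ n, |a n| ≤ 1}
  let g : ι → StrongDual ℝ X →L[ℝ] ℝ := fun i =>
    NormedSpace.inclusionInDoubleDual ℝ X (∑ n ∈ i.1, i.2.1 n • y n)
  have hb : ∀ φ : StrongDual ℝ X, ∃ C, ∀ i, ‖g i φ‖ ≤ C := by
    intro φ
    refine ⟨∑' n, |φ (y n)|, fun i => ?_⟩
    have h1 : g i φ = ∑ n ∈ i.1, i.2.1 n * φ (y n) := by
      simp [g, map_sum]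
    rw [h1, Real.norm_eq_abs]
    calc |∑ n ∈ i.1, i.2.1 n * φ (y n)| ≤ ∑ n ∈ i.1, |i.2.1 n * φ (y n)| :=
          Finset.abs_sum_le_sum_abs _ _
      _ ≤ ∑ n ∈ i.1, |φ (y n)| := by
          refine Finset.sum_le_sum fun n _ => ?_
          rw [abs_mul]
          exact mul_le_of_le_one_left (abs_nonneg _) (i.2.2 n)
      _ ≤ ∑' n, |φ (y n)| := Summable.sum_le_tsum _ (fun n _ => abs_nonneg _) (h φ)
  obtain ⟨M, hM⟩ := banach_steinhaus hb
  refine ⟨M + 1, ?_, fun s a ha => ?_⟩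
  · have := hM (∅, ⟨0, by simp⟩)
    have h0 : (0:ℝ) ≤ M := le_trans (norm_nonneg _) this
    linarith
  · have h2 : ‖∑ n ∈ s, a n • y n‖ = ‖g (s, ⟨a, ha⟩)‖ :=
      ((NormedSpace.inclusionInDoubleDualLi ℝ (E := X)).norm_map _).symm
    rw [h2]
    exact le_trans (hM _) (by linarith)

/-- A norm-at-most-one functional vanishing on a closed subspace and big at a far point. -/
lemma bp_exists_functional (F : Submodule ℝ X) (hF : IsClosed (F : Set X)) (z : X)
    {d : ℝ} (hd : 0 < d) (hdist : d ≤ Metric.infDist z (F : Set X)) :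
    ∃ ψ : X →L[ℝ] ℝ, ‖ψ‖ ≤ 1 ∧ (∀ w ∈ F, ψ w = 0) ∧ d ≤ ψ z := by
  letI : NormedAddCommGroup (X ⧸ F) := @Submodule.Quotient.normedAddCommGroup _ _ _ _ _ F hF
  letI : NormedSpace ℝ (X ⧸ F) := Submodule.Quotient.normedSpace F ℝ
  have hnorm : ∀ m : X, ‖(Submodule.Quotient.mk m : X ⧸ F)‖ = Metric.infDist m (F : Set X) := by
    intro m
    exact QuotientAddGroup.norm_mk (S := F.toAddSubgroup) m
  have hzne : (Submodule.Quotient.mk z : X ⧸ F) ≠ 0 := by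
    intro hz
    rw [← norm_eq_zero (a := (Submodule.Quotient.mk z : X ⧸ F))] at hz
    rw [hnorm] at hz
    rw [hz] at hdist
    linarith
  obtain ⟨g, hg1, hg2⟩ := exists_dual_vector ℝ (Submodule.Quotient.mk z : X ⧸ F) (norm_ne_zero_iff.mpr hzne)
  let mkCLM : X →L[ℝ] (X ⧸ F) :=
    LinearMap.mkContinuous F.mkQ 1 (fun m => by
      simpa [one_mul] using Submodule.Quotient.norm_mk_le F m)
  refine ⟨g.comp mkCLM, ?_, ?_, ?_⟩
  · have h1 : ‖mkCLM‖ ≤ 1 := LinearMap.mkContinuous_norm_le _ zero_le_one _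
    calc ‖g.comp mkCLM‖ ≤ ‖g‖ * ‖mkCLM‖ := ContinuousLinearMap.opNorm_comp_le _ _
      _ ≤ 1 := by rw [hg1]; simpa using h1
  · intro w hw
    have hw0 : mkCLM w = 0 := by
      show F.mkQ w = 0
      simpa [Submodule.Quotient.mk_eq_zero] using hw
    simp [ContinuousLinearMap.comp_apply, hw0]
  · have h3 : g.comp mkCLM z = g (Submodule.Quotient.mk z) := rfl
    rw [h3, hg2, hnorm]
    exact hdist

lemma bp_exists_far {ε C : ℝ} (hε : 0 < ε) (y : ℕ → X)
    (hy : ∀ n, ε ≤ ‖y n‖) (hC : ∀ n, ‖y n‖ ≤ C)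
    (hw : ∀ φ : X →L[ℝ] ℝ, Tendsto (fun n => φ (y n)) atTop (𝓝 0))
    (F : Submodule ℝ X) [FiniteDimensional ℝ F] (N : ℕ) :
    ∃ n, N ≤ n ∧ ε / 4 ≤ Metric.infDist (y n) (F : Set X) := by
  by_contra hcon
  push_neg at hcon
  have hne : (F : Set X).Nonempty := ⟨0, F.zero_mem⟩
  have hsel : ∀ m : ℕ, ∃ w : F, dist (y (N + m)) (w : X) < ε / 4 := by
    intro m
    have h1 := hcon (N + m) (Nat.le_add_right _ _)
    obtain ⟨w, hwF, hwlt⟩ := (Metric.infDist_lt_iff hne).mp h1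
    exact ⟨⟨w, hwF⟩, hwlt⟩
  choose w hwlt using hsel
  have hwb : ∀ m, ‖w m‖ ≤ C + ε / 4 := by
    intro m
    have h0 := hwlt m
    rw [dist_eq_norm] at h0
    have h1 : ‖(w m : X)‖ ≤ ‖y (N + m)‖ + ε / 4 := by
      calc ‖(w m : X)‖ = ‖y (N + m) - (y (N + m) - (w m : X))‖ := by congr 1; abel
        _ ≤ ‖y (N + m)‖ + ‖y (N + m) - (w m : X)‖ := norm_sub_le _ _
        _ ≤ ‖y (N + m)‖ + ε / 4 := by linarith
    calc ‖w m‖ = ‖(w m : X)‖ := rfl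
      _ ≤ C + ε / 4 := le_trans h1 (by linarith [hC (N + m)])
  have hcpt : IsCompact (Metric.closedBall (0 : F) (C + ε / 4)) :=
    isCompact_closedBall _ _
  have hmem : ∀ m, w m ∈ Metric.closedBall (0 : F) (C + ε / 4) := by
    intro m
    simpa [Metric.mem_closedBall, dist_zero_right] using hwb m
  obtain ⟨l, -, φ, hφmono, hφtend⟩ := hcpt.tendsto_subseq hmem
  have hl : ‖(l : X)‖ ≤ ε / 4 := by
    refine NormedSpace.norm_le_dual_bound ℝ _ (by linarith) fun f => ?_
    have h1 : Tendsto (fun j => f ((w (φ j)) : X)) atTop (𝓝 (f (l : X))) := by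
      have h1' : Tendsto (fun j => ((w (φ j)) : X)) atTop (𝓝 (l : X)) :=
        (continuous_subtype_val.tendsto l).comp hφtend
      exact (f.continuous.tendsto _).comp h1'
    have h2 : Tendsto (fun j => f (y (N + φ j))) atTop (𝓝 0) := by
      have hφt : Tendsto φ atTop atTop := hφmono.tendsto_atTop
      have hNt : Tendsto (fun j => N + φ j) atTop atTop :=
        tendsto_atTop_mono (fun j => Nat.le_add_left _ _) hφt
      exact (hw f).comp hNt
    have h3 : Tendsto (fun j => f ((w (φ j)) : X) - f (y (N + φ j))) atTop (𝓝 (f (l : X))) := by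
      simpa using h1.sub h2
    have h4 : Tendsto (fun j => |f ((w (φ j)) : X) - f (y (N + φ j))|) atTop (𝓝 |f (l : X)|) :=
      h3.abs
    have h5 : ∀ j, |f ((w (φ j)) : X) - f (y (N + φ j))| ≤ ε / 4 * ‖f‖ := by
      intro j
      have he : f ((w (φ j)) : X) - f (y (N + φ j)) = f ((w (φ j) : X) - y (N + φ j)) := by
        rw [map_sub]
      rw [he]
      calc |f ((w (φ j) : X) - y (N + φ j))| ≤ ‖f‖ * ‖(w (φ j) : X) - y (N + φ j)‖ :=
            f.le_opNorm _
        _ ≤ ‖f‖ * (ε / 4) := by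
            refine mul_le_mul_of_nonneg_left ?_ (norm_nonneg f)
            have h6 := hwlt (φ j)
            rw [dist_eq_norm] at h6
            rw [← norm_neg]
            simpa [neg_sub] using h6.le
        _ = ε / 4 * ‖f‖ := by ring
    have h7 := le_of_tendsto h4 (Eventually.of_forall h5)
    simpa [Real.norm_eq_abs] using h7
  obtain ⟨j, hj⟩ := (Metric.tendsto_atTop.mp hφtend) (ε / 4) (by linarith)
  have hj' := hj j le_rfl
  have hwl : ‖(w (φ j) : X) - (l : X)‖ < ε / 4 := by
    have hd : dist (w (φ j)) l < ε / 4 := hj'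
    rw [Subtype.dist_eq, dist_eq_norm] at hd
    exact hd
  have hyb : ‖y (N + φ j)‖ < ε := by
    have h1 : ‖y (N + φ j) - (w (φ j) : X)‖ < ε / 4 := by
      have h2 := hwlt (φ j); rwa [dist_eq_norm] at h2
    calc ‖y (N + φ j)‖
        = ‖(y (N + φ j) - (w (φ j) : X)) + ((w (φ j) : X) - (l : X)) + (l : X)‖ := by
          congr 1; abel
      _ ≤ ‖y (N + φ j) - (w (φ j) : X)‖ + ‖(w (φ j) : X) - (l : X)‖ + ‖(l : X)‖ :=
          norm_add₃_le
      _ < ε := by linarith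
  exact absurd (hy (N + φ j)) (not_le.mpr hyb)

end helpers

/-- Bessaga–Pełczyński: if a Banach space `X` contains no subspace
isomorphic to `c₀` (i.e. there is no continuous linear embedding of `c₀` into `X`
bounded below), then every weakly unconditionally Cauchy series in `X` converges
unconditionally. -/
theorem wuc_implies_unconditional_of_no_c0
    (X : Type*) [NormedAddCommGroup X] [NormedSpace ℝ X] [CompleteSpace X]
    (hc0 : ¬ ∃ (f : C₀(ℕ, ℝ) →L[ℝ] X) (c : ℝ), 0 < c ∧ ∀ v, c * ‖v‖ ≤ ‖f v‖)
    (x : ℕ → X)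
    (hwuc : ∀ φ : X →L[ℝ] ℝ, Summable (fun n => |φ (x n)|)) :
    ∃ s : X, HasSum x s := by
  by_contra hns
  have hnsum : ¬ Summable x := hns
  rw [summable_iff_vanishing] at hnsum
  push_neg at hnsum
  obtain ⟨e, he, H⟩ := hnsum
  obtain ⟨ε, hε, hball⟩ := Metric.mem_nhds_iff.mp he
  have H' : ∀ s : Finset ℕ, ∃ t, Disjoint t s ∧ ε ≤ ‖∑ m ∈ t, x m‖ := by
    intro s
    obtain ⟨t, ht1, ht2⟩ := H s
    refine ⟨t, ht1, ?_⟩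
    by_contra hlt
    push_neg at hlt
    exact ht2 (hball (by simpa [Metric.mem_ball, dist_zero_right] using hlt))
  choose g hg1 hg2 using H'
  classical
  -- build pairwise disjoint blocks
  let u : ℕ → Finset ℕ × Finset ℕ :=
    fun k => Nat.rec (g ∅, g ∅) (fun _ p => (g p.2, p.2 ∪ g p.2)) k
  let t : ℕ → Finset ℕ := fun k => (u k).1
  have hu1 : ∀ k, t k ⊆ (u k).2 := by
    intro k
    cases k with
    | zero => exact subset_rfl
    | succ m => exact Finset.subset_union_right
  have hu2 : ∀ i j, i ≤ j → (u i).2 ⊆ (u j).2 := by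
    intro i j hij
    induction j with
    | zero => simpa [Nat.le_zero.mp hij] using subset_rfl
    | succ m ih =>
      rcases Nat.le_succ_iff.mp hij with h | h
      · exact (ih h).trans (Finset.subset_union_left (s₂ := g (u m).2))
      · simp [h]
  have hdisjt : ∀ i j, i < j → Disjoint (t i) (t j) := by
    intro i j hij
    obtain ⟨m, rfl⟩ := Nat.exists_eq_add_of_lt hij
    have h1 : Disjoint (t (i + m + 1)) ((u (i + m)).2) := hg1 _
    exact (h1.mono_right ((hu1 i).trans (hu2 i (i + m) (Nat.le_add_right _ _)))).symm
  have hbig : ∀ k, ε ≤ ‖∑ m ∈ t k, x m‖ := by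
    intro k
    cases k with
    | zero => exact hg2 ∅
    | succ m => exact hg2 _
  set y : ℕ → X := fun k => ∑ m ∈ t k, x m with hy_def
  have hywuc : ∀ φ : X →L[ℝ] ℝ, Summable fun k => |φ (y k)| := by
    intro φ
    refine summable_of_sum_le (c := ∑' m, |φ (x m)|) (fun k => abs_nonneg _) (fun s => ?_)
    calc ∑ k ∈ s, |φ (y k)| ≤ ∑ k ∈ s, ∑ m ∈ t k, |φ (x m)| := by
          refine Finset.sum_le_sum fun k _ => ?_
          simp only [hy_def, map_sum]
          exact Finset.abs_sum_le_sum_abs _ _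
      _ = ∑ m ∈ s.biUnion t, |φ (x m)| := by
          refine (Finset.sum_biUnion ?_).symm
          intro i _ j _ hij
          rcases lt_or_gt_of_ne hij with h | h
          · exact hdisjt i j h
          · exact (hdisjt j i h).symm
      _ ≤ ∑' m, |φ (x m)| := Summable.sum_le_tsum _ (fun _ _ => abs_nonneg _) (hwuc φ)
  obtain ⟨M, hM0, hM⟩ := bp_wuc_bound y hywuc
  have hyC : ∀ k, ‖y k‖ ≤ M := by
    intro k
    have h1 := hM {k} (fun n => if n = k then 1 else 0) (by
      intro n; by_cases h : n = k <;> simp [h])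
    simpa using h1
  have hybig : ∀ k, ε ≤ ‖y k‖ := hbig
  have hw0 : ∀ φ : X →L[ℝ] ℝ, Tendsto (fun k => φ (y k)) atTop (𝓝 0) := by
    intro φ
    rw [tendsto_zero_iff_abs_tendsto_zero]
    exact (hywuc φ).tendsto_atTop_zero
  -- selection of a c₀-like subsequence
  set P : ℕ × (X →L[ℝ] ℝ) → Prop :=
    fun a => ‖a.2‖ ≤ 1 ∧ ε / 8 ≤ a.2 (y a.1) with hP_def
  set r : ℕ × (X →L[ℝ] ℝ) → ℕ × (X →L[ℝ] ℝ) → Prop :=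
    fun a b => a.1 < b.1 ∧ b.2 (y a.1) = 0 ∧
      ∀ s : Finset ℕ, (∀ m ∈ s, b.1 ≤ m) → ∑ m ∈ s, |a.2 (y m)| ≤ ε / 32 with hr_def
  have htail : ∀ a : ℕ × (X →L[ℝ] ℝ), ∃ N : ℕ,
      ∀ fs : Finset ℕ, (∀ m ∈ fs, N ≤ m) → ∑ m ∈ fs, |a.2 (y m)| ≤ ε / 32 := by
    intro a
    have hsum := hywuc a.2
    have hmem : Set.Ioo (-(ε/32)) (ε/32) ∈ 𝓝 (0:ℝ) :=
      Ioo_mem_nhds (by linarith) (by linarith)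
    obtain ⟨s₀, hs₀⟩ := hsum.vanishing hmem
    refine ⟨s₀.sup id + 1, fun fs hfs => ?_⟩
    have hdisj : Disjoint fs s₀ := by
      rw [Finset.disjoint_left]
      intro m hm hm0
      have h1 := hfs m hm
      have h2 : m ≤ s₀.sup id := Finset.le_sup (f := id) hm0
      omega
    have h3 := hs₀ fs hdisj
    exact h3.2.le
  choose Nt hNt using htail
  have hstep : ∀ s : Finset (ℕ × (X →L[ℝ] ℝ)), (∀ a ∈ s, P a) → ∃ b, P b ∧ ∀ a ∈ s, r a b := by
    intro s _
    set N : ℕ := max (s.sup (fun a => a.1) + 1) (s.sup Nt) with hN_def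
    set F : Submodule ℝ X := Submodule.span ℝ (↑(s.image (fun a => y a.1)) : Set X) with hF_def
    obtain ⟨n, hnN, hfar⟩ := bp_exists_far hε y hybig hyC hw0 F N
    obtain ⟨ψ, hψ1, hψ2, hψ3⟩ := bp_exists_functional F F.closed_of_finiteDimensional (y n)
      (show (0:ℝ) < ε/4 by linarith) hfar
    refine ⟨(n, ψ), ⟨hψ1, by simpa using le_trans (by linarith) hψ3⟩, fun a ha => ⟨?_, ?_, ?_⟩⟩
    · have h1 : a.1 < s.sup (fun a => a.1) + 1 :=
        Nat.lt_succ_of_le (Finset.le_sup (f := fun a => a.1) ha)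
      exact lt_of_lt_of_le h1 (le_trans (le_max_left _ _) hnN)
    · apply hψ2
      apply Submodule.subset_span
      simp only [Finset.coe_image, Set.mem_image, Finset.mem_coe]
      exact ⟨a, ha, rfl⟩
    · intro fs hfs
      apply hNt a
      intro m hm
      exact le_trans (le_trans (Finset.le_sup (f := Nt) ha) (le_trans (le_max_right _ _) hnN))
        (hfs m hm)
  obtain ⟨f, hPf, hrf⟩ := exists_seq_of_forall_finset_exists P r hstep
  set nn : ℕ → ℕ := fun k => (f k).1 with hnn_def
  set ψ : ℕ → X →L[ℝ] ℝ := fun k => (f k).2 with hψ_def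
  set z : ℕ → X := fun k => y (nn k) with hz_def
  have hmono : StrictMono nn := fun i j h => (hrf i j h).1
  have hzwuc : ∀ φ : X →L[ℝ] ℝ, Summable fun k => |φ (z k)| := fun φ =>
    (hywuc φ).comp_injective hmono.injective
  obtain ⟨M', hM'0, hM'⟩ := bp_wuc_bound z hzwuc
  have hvk : ∀ (v : C₀(ℕ, ℝ)) (k : ℕ), |v k| ≤ ‖v‖ := by
    intro v k
    have h1 := BoundedContinuousFunction.norm_coe_le_norm v.toBCF k
    rwa [ZeroAtInftyContinuousMap.norm_toBCF_eq_norm, Real.norm_eq_abs] at h1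
  -- summability of weighted series
  have hsum : ∀ v : C₀(ℕ, ℝ), Summable (fun k => v k • z k) := by
    intro v
    rw [summable_iff_vanishing]
    intro e' he'
    obtain ⟨δ, hδ, hball'⟩ := Metric.mem_nhds_iff.mp he'
    have hv0 : Tendsto (⇑v) atTop (𝓝 0) := by
      have h1 := v.zero_at_infty'
      rwa [cocompact_eq_atTop] at h1
    obtain ⟨N, hN⟩ := (Metric.tendsto_atTop.mp hv0) (δ / (2 * M')) (by positivity)
    refine ⟨Finset.range N, fun fs hdisj => ?_⟩
    apply hball'
    rw [Metric.mem_ball, dist_zero_right]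
    have hfsN : ∀ k ∈ fs, N ≤ k := by
      intro k hk
      by_contra hlt
      push_neg at hlt
      exact (Finset.disjoint_left.mp hdisj hk) (Finset.mem_range.mpr hlt)
    set b : ℝ := δ / (2 * M') with hb_def
    have hb : 0 < b := by positivity
    set a : ℕ → ℝ := fun k => if k ∈ fs then v k / b else 0 with ha_def
    have ha : ∀ k, |a k| ≤ 1 := by
      intro k
      by_cases hk : k ∈ fs
      · have h1 := hN k (hfsN k hk)
        rw [dist_zero_right, Real.norm_eq_abs] at h1
        simp only [ha_def, hk, if_true, abs_div, abs_of_pos hb]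
        rw [div_le_one hb]
        exact h1.le
      · simp [ha_def, hk]
    have heq : ∑ k ∈ fs, v k • z k = b • ∑ k ∈ fs, a k • z k := by
      rw [Finset.smul_sum]
      refine Finset.sum_congr rfl fun k hk => ?_
      rw [ha_def]
      simp only [hk, if_true, smul_smul]
      congr 1
      field_simp
    rw [heq, norm_smul, Real.norm_eq_abs, abs_of_pos hb]
    calc b * ‖∑ k ∈ fs, a k • z k‖ ≤ b * M' := by
          exact mul_le_mul_of_nonneg_left (hM' fs a ha) hb.le
      _ = δ / 2 := by
          rw [hb_def]; field_simp
      _ < δ := by linarith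
  -- the operator
  have hnorm_tsum : ∀ v : C₀(ℕ, ℝ), ‖∑' k, v k • z k‖ ≤ M' * ‖v‖ := by
    intro v
    by_cases hv : ‖v‖ = 0
    · have hv' : v = 0 := norm_eq_zero.mp hv
      simp [hv', hv]
    · have hvpos : 0 < ‖v‖ := lt_of_le_of_ne (norm_nonneg v) (Ne.symm hv)
      set a : ℕ → ℝ := fun k => v k / ‖v‖ with ha_def
      have ha : ∀ k, |a k| ≤ 1 := by
        intro k
        rw [ha_def]
        rw [abs_div, abs_of_pos hvpos, div_le_one hvpos]
        exact hvk v k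
      have hsum' : Summable (fun k => a k • z k) := by
        have h1 : (fun k => a k • z k) = fun k => (‖v‖)⁻¹ • (v k • z k) := by
          funext k
          rw [ha_def, smul_smul]
          congr 1
          field_simp
        rw [h1]
        exact (hsum v).const_smul _
      have heq : ∑' k, v k • z k = ‖v‖ • ∑' k, a k • z k := by
        rw [← Summable.tsum_const_smul _ hsum']
        congr 1
        funext k
        rw [ha_def, smul_smul]
        congr 1
        field_simp
      rw [heq, norm_smul, Real.norm_eq_abs, abs_of_pos hvpos, mul_comm]
      refine mul_le_mul_of_nonneg_right ?_ hvpos.le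
      have hhs : HasSum (fun k => a k • z k) (∑' k, a k • z k) := hsum'.hasSum
      have htend : Tendsto (fun s : Finset ℕ => ‖∑ k ∈ s, a k • z k‖) atTop
          (𝓝 ‖∑' k, a k • z k‖) := (continuous_norm.tendsto _).comp hhs
      exact le_of_tendsto htend (Eventually.of_forall fun s => hM' s a ha)
  set T : C₀(ℕ, ℝ) →ₗ[ℝ] X :=
    { toFun := fun v => ∑' k, v k • z k
      map_add' := by
        intro v w
        have h1 : ∀ k, (v + w) k • z k = v k • z k + w k • z k := by
          intro k
          simp [add_smul]
        simp only [h1]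
        exact Summable.tsum_add (hsum v) (hsum w)
      map_smul' := by
        intro c v
        have h1 : ∀ k, (c • v) k • z k = c • (v k • z k) := by
          intro k
          simp [smul_smul]
        simp only [h1, RingHom.id_apply]
        exact Summable.tsum_const_smul _ (hsum v) } with hT_def
  set Tc : C₀(ℕ, ℝ) →L[ℝ] X := T.mkContinuous M' (fun v => hnorm_tsum v) with hTc_def
  have hTc_apply : ∀ v : C₀(ℕ, ℝ), Tc v = ∑' k, v k • z k := fun v => rfl
  -- lower bound
  have hlow : ∀ v : C₀(ℕ, ℝ), ε / 16 * ‖v‖ ≤ ‖Tc v‖ := by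
    intro v
    have hkey : ∀ k, ε / 8 * |v k| - ε / 32 * ‖v‖ ≤ ‖Tc v‖ := by
      intro k
      have hψk1 : ‖ψ k‖ ≤ 1 := (hPf k).1
      have hψk2 : ε / 8 ≤ ψ k (z k) := (hPf k).2
      have hTv : (ψ k) (Tc v) = ∑' j, v j * (ψ k) (z j) := by
        rw [hTc_apply, ContinuousLinearMap.map_tsum (ψ k) (hsum v)]
        simp [smul_eq_mul]
      have habs : Summable (fun j => |v j * (ψ k) (z j)|) := by
        refine Summable.of_nonneg_of_le (fun j => abs_nonneg _) (fun j => ?_)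
          (((hzwuc (ψ k)).mul_left ‖v‖))
        rw [abs_mul]
        exact mul_le_mul_of_nonneg_right (hvk v j) (abs_nonneg _)
      have hgsum : Summable (fun j => v j * (ψ k) (z j)) := summable_abs_iff.mp habs
      have hsplit : ∑' j, v j * (ψ k) (z j) =
          v k * (ψ k) (z k) + ∑' j, ite (j = k) 0 (v j * (ψ k) (z j)) :=
        Summable.tsum_eq_add_tsum_ite hgsum k
      -- tail bound
      have hS2 : Summable (fun j => ite (j = k) (0:ℝ) |(ψ k) (z j)|) := by
        refine Summable.of_nonneg_of_le (fun j => ?_) (fun j => ?_) (hzwuc (ψ k))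
        · split <;> simp [abs_nonneg]
        · split <;> simp [abs_nonneg]
      have hT32 : ∑' j, ite (j = k) (0:ℝ) |(ψ k) (z j)| ≤ ε / 32 := by
        refine Summable.tsum_le_of_sum_le hS2 fun fs => ?_
        have h1 : ∑ j ∈ fs, ite (j = k) (0:ℝ) |(ψ k) (z j)|
            = ∑ j ∈ fs.filter (fun j => k < j), ite (j = k) (0:ℝ) |(ψ k) (z j)| := by
          refine (Finset.sum_filter_of_ne ?_).symm
          intro j _ hne
          rcases lt_trichotomy j k with h | h | h
          · exfalso
            apply hne
            have h2 : (ψ k) (z j) = 0 := (hrf j k h).2.1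
            simp [h2]
          · exfalso; apply hne; simp [h]
          · exact h
        rw [h1]
        have h2 : ∑ j ∈ fs.filter (fun j => k < j), ite (j = k) (0:ℝ) |(ψ k) (z j)|
            = ∑ j ∈ fs.filter (fun j => k < j), |(ψ k) (y (nn j))| := by
          refine Finset.sum_congr rfl fun j hj => ?_
          have hjk : k < j := (Finset.mem_filter.mp hj).2
          rw [if_neg (Nat.ne_of_gt hjk)]
        rw [h2]
        have h3 := Finset.sum_image (s := fs.filter (fun j => k < j)) (g := nn)
          (f := fun m => |(ψ k) (y m)|)
          (fun i _ j _ hij => hmono.injective hij)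
        rw [← h3]
        refine (hrf k (k + 1) (Nat.lt_succ_self k)).2.2 _ ?_
        intro m hm
        obtain ⟨j, hj, rfl⟩ := Finset.mem_image.mp hm
        have hjk : k < j := (Finset.mem_filter.mp hj).2
        exact hmono.monotone (Nat.succ_le_of_lt hjk)
      have hrest : |∑' j, ite (j = k) (0:ℝ) (v j * (ψ k) (z j))| ≤ ε / 32 * ‖v‖ := by
        have hS3 : Summable (fun j => |ite (j = k) (0:ℝ) (v j * (ψ k) (z j))|) := by
          refine Summable.of_nonneg_of_le (fun j => abs_nonneg _) (fun j => ?_) habs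
          split
          · simp [abs_nonneg]; positivity
          · exact le_rfl
        have hS3' : Summable (fun j => ‖ite (j = k) (0:ℝ) (v j * (ψ k) (z j))‖) := by
          simpa [Real.norm_eq_abs] using hS3
        have h4 : |∑' j, ite (j = k) (0:ℝ) (v j * (ψ k) (z j))|
            ≤ ∑' j, |ite (j = k) (0:ℝ) (v j * (ψ k) (z j))| := by
          simpa [Real.norm_eq_abs] using norm_tsum_le_tsum_norm hS3'
        refine le_trans h4 ?_
        have h5 : ∀ j, |ite (j = k) (0:ℝ) (v j * (ψ k) (z j))|
            ≤ ‖v‖ * ite (j = k) (0:ℝ) |(ψ k) (z j)| := by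
          intro j
          split
          · simp
          · rw [abs_mul]
            exact mul_le_mul_of_nonneg_right (hvk v j) (abs_nonneg _)
        calc ∑' j, |ite (j = k) (0:ℝ) (v j * (ψ k) (z j))|
            ≤ ∑' j, ‖v‖ * ite (j = k) (0:ℝ) |(ψ k) (z j)| :=
              Summable.tsum_le_tsum h5 hS3 (hS2.mul_left _)
          _ = ‖v‖ * ∑' j, ite (j = k) (0:ℝ) |(ψ k) (z j)| := tsum_mul_left
          _ ≤ ‖v‖ * (ε / 32) :=
              mul_le_mul_of_nonneg_left hT32 (norm_nonneg _)
          _ = ε / 32 * ‖v‖ := by ring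
      have hmain : ε / 8 * |v k| - ε / 32 * ‖v‖ ≤ |(ψ k) (Tc v)| := by
        rw [hTv, hsplit]
        have h6 : ε / 8 * |v k| ≤ |v k * (ψ k) (z k)| := by
          rw [abs_mul]
          have h7 : ε / 8 ≤ |(ψ k) (z k)| := le_trans hψk2 (le_abs_self _)
          calc ε / 8 * |v k| = |v k| * (ε/8) := by ring
            _ ≤ |v k| * |(ψ k) (z k)| := mul_le_mul_of_nonneg_left h7 (abs_nonneg _)
        calc ε / 8 * |v k| - ε / 32 * ‖v‖
            ≤ |v k * (ψ k) (z k)| - |∑' j, ite (j = k) (0:ℝ) (v j * (ψ k) (z j))| := by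
              linarith [hrest, h6]
          _ ≤ |v k * (ψ k) (z k) + ∑' j, ite (j = k) (0:ℝ) (v j * (ψ k) (z j))| := by
              have := abs_add_le (v k * (ψ k) (z k) + ∑' j, ite (j = k) (0:ℝ) (v j * (ψ k) (z j)))
                (-(∑' j, ite (j = k) (0:ℝ) (v j * (ψ k) (z j))))
              simp only [add_neg_cancel_right, abs_neg] at this
              linarith
      have hup : |(ψ k) (Tc v)| ≤ ‖Tc v‖ := by
        have h8 := (ψ k).le_opNorm (Tc v)
        rw [Real.norm_eq_abs] at h8
        calc |(ψ k) (Tc v)| ≤ ‖ψ k‖ * ‖Tc v‖ := h8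
          _ ≤ 1 * ‖Tc v‖ := mul_le_mul_of_nonneg_right hψk1 (norm_nonneg _)
          _ = ‖Tc v‖ := one_mul _
      linarith
    by_contra hcon
    push_neg at hcon
    have hvpos : 0 < ‖v‖ := by
      by_contra hv0
      push_neg at hv0
      have : ‖v‖ = 0 := le_antisymm hv0 (norm_nonneg _)
      rw [this] at hcon
      simp at hcon
      exact absurd hcon (not_lt.mpr (norm_nonneg _))
    have hbound : ∀ k, |v k| ≤ 3 / 4 * ‖v‖ := by
      intro k
      have h1 := hkey k
      nlinarith [hkey k, hcon]
    have h2 : ‖v‖ ≤ 3 / 4 * ‖v‖ := by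
      have h3 : ‖v.toBCF‖ ≤ 3 / 4 * ‖v‖ := by
        rw [BoundedContinuousFunction.norm_le (by positivity)]
        intro k
        simpa [Real.norm_eq_abs] using hbound k
      rwa [ZeroAtInftyContinuousMap.norm_toBCF_eq_norm] at h3
    linarith
  exact hc0 ⟨Tc, ε / 16, by linarith, hlow⟩
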